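/- Let A be a parity automaton with costs. For every state q and letter a, the one-transition run (q, a, δ(q,a)) has type Upd_A(Init_A(q), a); and for every non-empty finite run ρ = (q_0,a_0,q_1)⋯(q_{n−1},a_{n−1},q_n) of A and every letter a ∈ Σ: if ρ has type t, then the extended run ρ · (q_n, a, δ(q_n,a)) has type Upd_A(t, a). -/

import Mathlib

attribute [local instance] Classical.propDecidable

noncomputable section

/-- A parity automaton with costs `(Q, A, qI, δ, Ω, Cst)`.
`Cst q a = true` means that the transition `(q, a, δ q a)` is an increment-transition,
`Cst q a = false` means it is an `ε`-transition. -/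
structure PACost (Q : Type) (A : Type) where
  qI : Q
  δ : Q → A → Q
  Ω : Q → ℕ
  Cst : Q → A → Bool

namespace PACost

variable {Q A : Type}

/-- The state reached after processing the first `n` letters of `w` starting in `q0`. -/
def stateAt (M : PACost Q A) (q0 : Q) (w : ℕ → A) : ℕ → Q
  | 0 => q0
  | n + 1 => M.δ (stateAt M q0 w n) (w n)

/-- The cost (number of increment-transitions) of the run infix between positions `m` and `n`. -/
def segCost (M : PACost Q A) (q0 : Q) (w : ℕ → A) (m n : ℕ) : ℕ :=
  ((Finset.Ico m n).filter fun j => M.Cst (stateAt M q0 w j) (w j) = true).card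

/-- `Ans c`: the set of even colors of `M` that are larger than `c`. -/
def Ans (M : PACost Q A) (c : ℕ) : Set ℕ :=
  { c' | (∃ q, M.Ω q = c') ∧ c < c' ∧ Even c' }

/-- The cost-of-response at position `n` of the run of `M` on `w` starting in `q0`. -/
def Cor (M : PACost Q A) (q0 : Q) (w : ℕ → A) (n : ℕ) : ℕ∞ :=
  if Even (M.Ω (stateAt M q0 w n)) then 0
  else
    sInf { c : ℕ∞ | ∃ n', n < n' ∧
      M.Ω (stateAt M q0 w n') ∈ M.Ans (M.Ω (stateAt M q0 w n)) ∧
      c = (segCost M q0 w n n' : ℕ∞) }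

/-- The run of `M` on `w` starting in `q0` satisfies the parity condition with costs. -/
def Accepting (M : PACost Q A) (q0 : Q) (w : ℕ → A) : Prop :=
  Filter.limsup (fun n => Cor M q0 w n) Filter.atTop < ⊤

/-- The language of `M`. -/
def Lang (M : PACost Q A) : Set (ℕ → A) := { w | Accepting M M.qI w }

/-- `M` is a finitary Büchi automaton: every transition is an increment-transition and
all colors are `1` or `2`. -/
def FinBuchi (M : PACost Q A) : Prop :=
  (∀ q a, M.Cst q a = true) ∧ ∀ q, M.Ω q = 1 ∨ M.Ω q = 2

end PACost

/-- The finite segment `w m, w (m+1), …, w (n-1)` of an infinite word `w`. -/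
def seg {A : Type} (w : ℕ → A) (m n : ℕ) : List A :=
  (List.range (n - m)).map fun i => w (m + i)

namespace PACost

/-- Types of runs: `(first state, last state, max even color, max unanswered odd color,
increment occurred)`. -/
abbrev RType (Q : Type) := Q × Q × WithBot ℕ × WithBot ℕ × Bool

variable {Q A : Type}

/-- The type of the non-empty finite run of `M` starting in `q` processing `l`. -/
def runType (M : PACost Q A) (q : Q) (l : List A) : RType Q :=
  let sts := List.scanl M.δ q l
  let st : ℕ → Q := fun j => sts.getD j q
  ( q,
    l.foldl M.δ q,
    ((Finset.range sts.length).filter fun j => Even (M.Ω (st j))).sup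
      (fun j => (M.Ω (st j) : WithBot ℕ)),
    ((Finset.range sts.length).filter fun j =>
        Odd (M.Ω (st j)) ∧ ∀ j' < sts.length, j < j' →
          ¬(Even (M.Ω (st j')) ∧ M.Ω (st j) < M.Ω (st j'))).sup
      (fun j => (M.Ω (st j) : WithBot ℕ)),
    (sts.zip l).any fun p => M.Cst p.1 p.2 )

/-- The type of the empty run prefix starting in `q`. -/
def InitT (M : PACost Q A) (q : Q) : RType Q :=
  ( q, q,
    if Even (M.Ω q) then (M.Ω q : WithBot ℕ) else ⊥,
    if Odd (M.Ω q) then (M.Ω q : WithBot ℕ) else ⊥,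
    false )

/-- The type-update function. -/
def UpdT (M : PACost Q A) (t : RType Q) (a : A) : RType Q :=
  match t with
  | (q0, q1, c0, c1, ℓ) =>
    let q1' := M.δ q1 a
    ( q0, q1',
      if Even (M.Ω q1') then max c0 ((M.Ω q1' : WithBot ℕ)) else c0,
      if Odd (M.Ω q1') then max c1 ((M.Ω q1' : WithBot ℕ))
      else if ∃ c : ℕ, c1 = (c : WithBot ℕ) ∧ M.Ω q1' ∈ M.Ans c then ⊥
      else c1,
      ℓ || M.Cst q1 a )

end PACost

namespace PACost

variable {Q A : Type}

private lemma scanl_concat (f : Q → A → Q) (q : Q) (l : List A) (a : A) :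
    List.scanl f q (l ++ [a]) = List.scanl f q l ++ [f (List.foldl f q l) a] := by
  induction l generalizing q with
  | nil => simp [List.scanl]
  | cons b l ih => simp [List.scanl_cons, ih]

private lemma getD_scanl_length (f : Q → A → Q) (q : Q) (l : List A) (d : Q) :
    (List.scanl f q l).getD l.length d = List.foldl f q l := by
  induction l generalizing q with
  | nil => simp [List.scanl]
  | cons b l ih =>
    simp only [List.scanl_cons, List.length_cons, List.getD_cons_succ, List.foldl_cons]
    exact ih _

private lemma zip_concat_concat {α β : Type*} (s : List α) (t : List β) (x : α) (b : β)
    (h : s.length = t.length + 1) :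
    (s ++ [x]).zip (t ++ [b]) = s.zip t ++ [(s.getD t.length x, b)] := by
  induction t generalizing s with
  | nil =>
    match s, h with
    | [y], _ => simp
  | cons b' t ih =>
    match s, h with
    | y :: s, h =>
      simp only [List.length_cons] at h
      simp [ih s (by omega)]

private lemma sup_range_succ (m : ℕ) (P : ℕ → Prop) [DecidablePred P] (f : ℕ → WithBot ℕ) :
    ((Finset.range (m+1)).filter P).sup f =
      if P m then max (((Finset.range m).filter P).sup f) (f m)
      else ((Finset.range m).filter P).sup f := by
  rw [Finset.range_add_one, Finset.filter_insert]
  split_ifs with h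
  · rw [Finset.sup_insert, sup_comm]
  · rfl

private lemma c0_concat (M : PACost Q A) (sts : List Q) (q x : Q) :
    ((Finset.range (sts ++ [x]).length).filter fun j =>
        Even (M.Ω ((sts ++ [x]).getD j q))).sup
      (fun j => (M.Ω ((sts ++ [x]).getD j q) : WithBot ℕ)) =
    if Even (M.Ω x) then
      max (((Finset.range sts.length).filter fun j => Even (M.Ω (sts.getD j q))).sup
        (fun j => (M.Ω (sts.getD j q) : WithBot ℕ))) ((M.Ω x : WithBot ℕ))
    else
      ((Finset.range sts.length).filter fun j => Even (M.Ω (sts.getD j q))).sup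
        (fun j => (M.Ω (sts.getD j q) : WithBot ℕ)) := by
  classical
  have hlt : ∀ j < sts.length, (sts ++ [x]).getD j q = sts.getD j q := fun j hj =>
    List.getD_append _ _ _ _ hj
  have htop : (sts ++ [x]).getD sts.length q = x := by
    rw [List.getD_append_right _ _ _ _ le_rfl]; simp
  have hlen : (sts ++ [x]).length = sts.length + 1 := by simp
  rw [hlen, sup_range_succ, htop]
  have hfilter : ((Finset.range sts.length).filter fun j =>
      Even (M.Ω ((sts ++ [x]).getD j q))) =
      ((Finset.range sts.length).filter fun j => Even (M.Ω (sts.getD j q))) :=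
    Finset.filter_congr fun j hj => by rw [hlt j (Finset.mem_range.mp hj)]
  have hsup : (((Finset.range sts.length).filter fun j =>
      Even (M.Ω ((sts ++ [x]).getD j q))).sup
        (fun j => (M.Ω ((sts ++ [x]).getD j q) : WithBot ℕ))) =
      (((Finset.range sts.length).filter fun j => Even (M.Ω (sts.getD j q))).sup
        (fun j => (M.Ω (sts.getD j q) : WithBot ℕ))) :=
    Finset.sup_congr hfilter fun j hj => by
      rw [hlt j (Finset.mem_range.mp (Finset.mem_filter.mp hj).1)]
  rw [hsup]

private lemma c1_concat (M : PACost Q A) (sts : List Q) (q x : Q) :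
    ((Finset.range (sts ++ [x]).length).filter fun j =>
        Odd (M.Ω ((sts ++ [x]).getD j q)) ∧ ∀ j' < (sts ++ [x]).length, j < j' →
          ¬(Even (M.Ω ((sts ++ [x]).getD j' q)) ∧
            M.Ω ((sts ++ [x]).getD j q) < M.Ω ((sts ++ [x]).getD j' q))).sup
      (fun j => (M.Ω ((sts ++ [x]).getD j q) : WithBot ℕ)) =
    (if Odd (M.Ω x) then
      max (((Finset.range sts.length).filter fun j =>
          Odd (M.Ω (sts.getD j q)) ∧ ∀ j' < sts.length, j < j' →
            ¬(Even (M.Ω (sts.getD j' q)) ∧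
              M.Ω (sts.getD j q) < M.Ω (sts.getD j' q))).sup
        (fun j => (M.Ω (sts.getD j q) : WithBot ℕ))) ((M.Ω x : WithBot ℕ))
    else if ∃ c : ℕ, (((Finset.range sts.length).filter fun j =>
          Odd (M.Ω (sts.getD j q)) ∧ ∀ j' < sts.length, j < j' →
            ¬(Even (M.Ω (sts.getD j' q)) ∧
              M.Ω (sts.getD j q) < M.Ω (sts.getD j' q))).sup
        (fun j => (M.Ω (sts.getD j q) : WithBot ℕ))) = (c : WithBot ℕ) ∧
          M.Ω x ∈ M.Ans c then ⊥
    else ((Finset.range sts.length).filter fun j =>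
          Odd (M.Ω (sts.getD j q)) ∧ ∀ j' < sts.length, j < j' →
            ¬(Even (M.Ω (sts.getD j' q)) ∧
              M.Ω (sts.getD j q) < M.Ω (sts.getD j' q))).sup
        (fun j => (M.Ω (sts.getD j q) : WithBot ℕ))) := by
  classical
  have hlt : ∀ j < sts.length, (sts ++ [x]).getD j q = sts.getD j q := fun j hj =>
    List.getD_append _ _ _ _ hj
  have htop : (sts ++ [x]).getD sts.length q = x := by
    rw [List.getD_append_right _ _ _ _ le_rfl]; simp
  have hlen : (sts ++ [x]).length = sts.length + 1 := by simp
  rw [hlen, sup_range_succ]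
  by_cases hodd : Odd (M.Ω x)
  · -- new last color is odd
    have hPm : Odd (M.Ω ((sts ++ [x]).getD sts.length q)) ∧
        ∀ j' < sts.length + 1, sts.length < j' →
        ¬(Even (M.Ω ((sts ++ [x]).getD j' q)) ∧
          M.Ω ((sts ++ [x]).getD sts.length q) < M.Ω ((sts ++ [x]).getD j' q)) :=
      ⟨by rw [htop]; exact hodd,
       fun j' h1 h2 => absurd (lt_of_lt_of_le h2 (Nat.lt_succ_iff.mp h1)) (lt_irrefl _)⟩
    rw [if_pos hPm, if_pos hodd, htop]
    congr 1
    refine Finset.sup_congr (Finset.filter_congr fun j hj => ?_)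
      (fun j hj => by rw [hlt j (Finset.mem_range.mp (Finset.mem_filter.mp hj).1)])
    have hjm := Finset.mem_range.mp hj
    rw [hlt j hjm]
    constructor
    · rintro ⟨h1, h2⟩
      exact ⟨h1, fun j' hj' hlt' => by
        have := h2 j' (by omega) hlt'
        rwa [hlt j' hj'] at this⟩
    · rintro ⟨h1, h2⟩
      refine ⟨h1, fun j' hj' hlt' => ?_⟩
      rcases Nat.lt_succ_iff_lt_or_eq.mp hj' with h | h
      · rw [hlt j' h]; exact h2 j' h hlt'
      · subst h; rw [htop]
        rintro ⟨he, _⟩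
        exact (Nat.not_even_iff_odd.mpr hodd) he
  · -- new last color is even
    have heven : Even (M.Ω x) := Nat.not_odd_iff_even.mp hodd
    have hPm : ¬(Odd (M.Ω ((sts ++ [x]).getD sts.length q)) ∧
        ∀ j' < sts.length + 1, sts.length < j' →
        ¬(Even (M.Ω ((sts ++ [x]).getD j' q)) ∧
          M.Ω ((sts ++ [x]).getD sts.length q) < M.Ω ((sts ++ [x]).getD j' q))) := by
      rw [htop]; rintro ⟨h1, _⟩; exact hodd h1
    rw [if_neg hPm, if_neg hodd]
    have hsup2 : (((Finset.range sts.length).filter fun j =>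
        Odd (M.Ω ((sts ++ [x]).getD j q)) ∧ ∀ j' < sts.length + 1, j < j' →
          ¬(Even (M.Ω ((sts ++ [x]).getD j' q)) ∧
            M.Ω ((sts ++ [x]).getD j q) < M.Ω ((sts ++ [x]).getD j' q))).sup
        (fun j => (M.Ω ((sts ++ [x]).getD j q) : WithBot ℕ))) =
        (((Finset.range sts.length).filter fun j =>
          (Odd (M.Ω (sts.getD j q)) ∧ ∀ j' < sts.length, j < j' →
            ¬(Even (M.Ω (sts.getD j' q)) ∧
              M.Ω (sts.getD j q) < M.Ω (sts.getD j' q))) ∧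
          M.Ω x ≤ M.Ω (sts.getD j q)).sup
        (fun j => (M.Ω (sts.getD j q) : WithBot ℕ))) := by
      refine Finset.sup_congr (Finset.filter_congr fun j hj => ?_)
        (fun j hj => by rw [hlt j (Finset.mem_range.mp (Finset.mem_filter.mp hj).1)])
      have hjm := Finset.mem_range.mp hj
      rw [hlt j hjm]
      constructor
      · rintro ⟨h1, h2⟩
        refine ⟨⟨h1, fun j' hj' hlt' => by
          have := h2 j' (by omega) hlt'
          rwa [hlt j' hj'] at this⟩, ?_⟩
        by_contra hle
        refine h2 sts.length (by omega) hjm ?_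
        rw [htop]
        exact ⟨heven, by omega⟩
      · rintro ⟨⟨h1, h2⟩, h3⟩
        refine ⟨h1, fun j' hj' hlt' => ?_⟩
        rcases Nat.lt_succ_iff_lt_or_eq.mp hj' with h | h
        · rw [hlt j' h]; exact h2 j' h hlt'
        · subst h; rw [htop]
          rintro ⟨_, hlt2⟩
          omega
    rw [hsup2, ← Finset.filter_filter]
    set s := (Finset.range sts.length).filter (fun j =>
        Odd (M.Ω (sts.getD j q)) ∧ ∀ j' < sts.length, j < j' →
          ¬(Even (M.Ω (sts.getD j' q)) ∧
            M.Ω (sts.getD j q) < M.Ω (sts.getD j' q))) with hs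
    set c1 := s.sup (fun j => (M.Ω (sts.getD j q) : WithBot ℕ)) with hc1
    by_cases hle : (M.Ω x : WithBot ℕ) ≤ c1
    · -- c1 is at least the new color, so it is not answered
      have hsne : s.Nonempty := by
        by_contra hemp
        rw [Finset.not_nonempty_iff_eq_empty] at hemp
        rw [hc1, hemp, Finset.sup_empty] at hle
        simpa using hle
      obtain ⟨j0, hj0, hj0sup⟩ :=
        Finset.exists_mem_eq_sup s hsne (fun j => (M.Ω (sts.getD j q) : WithBot ℕ))
      have hj0sup' : c1 = (M.Ω (sts.getD j0 q) : WithBot ℕ) := hj0sup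
      have hcx : M.Ω x ≤ M.Ω (sts.getD j0 q) := by
        have h' := hle
        rw [hj0sup'] at h'
        exact WithBot.coe_le_coe.mp h'
      have hcond : ¬ ∃ c : ℕ, c1 = (c : WithBot ℕ) ∧ M.Ω x ∈ M.Ans c := by
        rintro ⟨c, hc, ⟨_, hltc, _⟩⟩
        have : M.Ω (sts.getD j0 q) = c := WithBot.coe_inj.mp (hj0sup'.symm.trans hc)
        omega
      rw [if_neg hcond]
      refine le_antisymm (Finset.sup_mono (Finset.filter_subset _ _)) ?_
      have hj0mem : j0 ∈ s.filter (fun j => M.Ω x ≤ M.Ω (sts.getD j q)) :=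
        Finset.mem_filter.mpr ⟨hj0, hcx⟩
      calc c1 = (M.Ω (sts.getD j0 q) : WithBot ℕ) := hj0sup'
        _ ≤ _ := Finset.le_sup (f := fun j => (M.Ω (sts.getD j q) : WithBot ℕ)) hj0mem
    · -- c1 is either ⊥ or answered by the new color
      have hemp : s.filter (fun j => M.Ω x ≤ M.Ω (sts.getD j q)) = ∅ := by
        refine Finset.filter_eq_empty_iff.mpr fun {j} hj hxj => hle ?_
        calc (M.Ω x : WithBot ℕ) ≤ (M.Ω (sts.getD j q) : WithBot ℕ) :=
              WithBot.coe_le_coe.mpr hxj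
          _ ≤ c1 := Finset.le_sup (f := fun j => (M.Ω (sts.getD j q) : WithBot ℕ)) hj
      rw [hemp, Finset.sup_empty]
      rcases eq_or_ne c1 ⊥ with hb | hb
      · have hcond : ¬ ∃ c : ℕ, c1 = (c : WithBot ℕ) ∧ M.Ω x ∈ M.Ans c := by
          rintro ⟨c, hc, _⟩
          rw [hb] at hc
          exact WithBot.bot_ne_coe hc
        rw [if_neg hcond, hb]
      · have hsne : s.Nonempty := by
          by_contra hemp'
          rw [Finset.not_nonempty_iff_eq_empty] at hemp'
          rw [hc1, hemp', Finset.sup_empty] at hb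
          exact hb rfl
        obtain ⟨j0, hj0, hj0sup⟩ :=
          Finset.exists_mem_eq_sup s hsne (fun j => (M.Ω (sts.getD j q) : WithBot ℕ))
        have hj0sup' : c1 = (M.Ω (sts.getD j0 q) : WithBot ℕ) := hj0sup
        have hcx : M.Ω (sts.getD j0 q) < M.Ω x := by
          by_contra hge
          push_neg at hge
          refine hle ?_
          rw [hj0sup']
          exact WithBot.coe_le_coe.mpr hge
        have hcond : ∃ c : ℕ, c1 = (c : WithBot ℕ) ∧ M.Ω x ∈ M.Ans c :=
          ⟨M.Ω (sts.getD j0 q), hj0sup', ⟨x, rfl⟩, hcx, heven⟩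
        rw [if_pos hcond]

private lemma runType_nil (M : PACost Q A) (q : Q) : M.runType q [] = M.InitT q := by
  classical
  have hv : ∀ j' < 1, 0 < j' → False := by omega
  simp only [runType, InitT, List.scanl_nil, List.length_singleton, Finset.range_one,
    Finset.filter_singleton, List.foldl_nil, List.zip_nil_right, List.any_nil,
    Prod.mk.injEq, List.getElem?_getD_singleton_default_eq]
  norm_num
  constructor <;> (split_ifs <;> simp)

private lemma runType_concat (M : PACost Q A) (q : Q) (l : List A) (a : A) :
    M.runType q (l ++ [a]) = M.UpdT (M.runType q l) a := by
  classical
  have hsl : List.scanl M.δ q (l ++ [a]) =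
      List.scanl M.δ q l ++ [M.δ (List.foldl M.δ q l) a] := scanl_concat _ _ _ _
  simp only [runType, UpdT, hsl, Prod.mk.injEq]
  refine ⟨trivial, by simp, c0_concat _ _ _ _, c1_concat _ _ _ _, ?_⟩
  rw [zip_concat_concat _ _ _ _ (by simp [List.length_scanl]), List.any_append,
    getD_scanl_length]
  simp

end PACost

/-- types are computed on the fly. The one-transition run `(q, a, δ q a)`
has type `Upd (Init q) a`, and extending a non-empty run of type `t` by one transition on
letter `a` yields a run of type `Upd t a`. -/
theorem statement2 {Q A : Type} [Fintype Q] [Fintype A] (M : PACost Q A) :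
    (∀ (q : Q) (a : A), M.runType q [a] = M.UpdT (M.InitT q) a) ∧
    (∀ (q : Q) (l : List A) (a : A), l ≠ [] →
      M.runType q (l ++ [a]) = M.UpdT (M.runType q l) a) := by
  constructor
  · intro q a
    have h := PACost.runType_concat M q [] a
    rw [PACost.runType_nil] at h
    simpa using h
  · intro q l a _
    exact PACost.runType_concat M q l a
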